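/- Let μ be a Borel probability measure on ℝ and let w be its Stieltjes transform. Then for all real numbers a < b one has lim_{ε → 0⁺} (1/π) ∫_a^b Im(w(x + iε)) dx = μ((a,b)) + (1/2) μ({a}) + (1/2) μ({b}). -/

import Mathlib

open MeasureTheory Filter

namespace StieltjesPerronAux

open Real Set

lemma im_inv_kernel (t x ε : ℝ) : ((t : ℂ) - (x + ε * Complex.I))⁻¹.im = ε / ((t - x)^2 + ε^2) := by
  rw [Complex.inv_im]
  simp [Complex.normSq_apply, Complex.sub_im, Complex.sub_re, Complex.add_im, Complex.add_re]
  ring_nf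

lemma integrable_kernel (μ : Measure ℝ) [IsProbabilityMeasure μ] (z : ℂ) (hz : z.im ≠ 0) :
    Integrable (fun t : ℝ => ((t : ℂ) - z)⁻¹) μ := by
  have hne : ∀ t : ℝ, ((t : ℂ) - z) ≠ 0 := by
    intro t h
    apply hz
    have := congrArg Complex.im h
    simpa using this.symm
  have hc : Continuous fun t : ℝ => ((t : ℂ) - z)⁻¹ :=
    Continuous.inv₀ (by continuity) hne
  apply (integrable_const (|z.im|⁻¹)).mono' hc.aestronglyMeasurable
  filter_upwards with t
  rw [norm_inv]
  apply inv_anti₀ (abs_pos.mpr hz)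
  calc |z.im| = |((t:ℂ) - z).im| := by simp
    _ ≤ ‖(t:ℂ) - z‖ := Complex.abs_im_le_norm _

lemma ftc_arctan (t ε a b : ℝ) (hε : 0 < ε) :
    ∫ x in a..b, ε / ((t - x)^2 + ε^2) = arctan ((b - t)/ε) - arctan ((a - t)/ε) := by
  have hderiv : ∀ x ∈ Set.uIcc a b,
      HasDerivAt (fun x => arctan ((x - t)/ε)) (ε / ((t - x)^2 + ε^2)) x := by
    intro x _
    have h1 : HasDerivAt (fun x : ℝ => (x - t)/ε) (1/ε) x := by
      simpa using ((hasDerivAt_id x).sub_const t).div_const ε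
    have h2 := (Real.hasDerivAt_arctan ((x - t)/ε)).comp x h1
    refine h2.congr_deriv ?_
    have hε' := hε.ne'
    field_simp
    ring
  rw [intervalIntegral.integral_eq_sub_of_hasDerivAt hderiv]
  · exact Continuous.intervalIntegrable (by
      apply Continuous.div continuous_const (by fun_prop)
      intro x; positivity) a b

lemma arctan_lim_pos (c : ℝ) (hc : 0 < c) :
    Tendsto (fun ε : ℝ => arctan (c/ε)) (nhdsWithin 0 (Set.Ioi 0)) (nhds (π/2)) := by
  have h1 : Tendsto (fun ε : ℝ => c/ε) (nhdsWithin 0 (Set.Ioi 0)) atTop := by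
    simpa [div_eq_mul_inv] using tendsto_inv_nhdsGT_zero.const_mul_atTop hc
  exact (Real.tendsto_arctan_atTop.mono_right nhdsWithin_le_nhds).comp h1

lemma arctan_lim_neg (c : ℝ) (hc : c < 0) :
    Tendsto (fun ε : ℝ => arctan (c/ε)) (nhdsWithin 0 (Set.Ioi 0)) (nhds (-(π/2))) := by
  have h1 : Tendsto (fun ε : ℝ => c/ε) (nhdsWithin 0 (Set.Ioi 0)) atBot := by
    have h2 : Tendsto (fun ε : ℝ => -(c * ε⁻¹)) (nhdsWithin 0 (Set.Ioi 0)) atTop := by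
      simpa [neg_mul] using tendsto_inv_nhdsGT_zero.const_mul_atTop (neg_pos.mpr hc)
    simpa [div_eq_mul_inv] using tendsto_neg_atBot_iff.mpr h2
  exact (Real.tendsto_arctan_atBot.mono_right nhdsWithin_le_nhds).comp h1

lemma fubini_step (μ : Measure ℝ) [IsProbabilityMeasure μ] (ε a b : ℝ) (hε : 0 < ε) (hab : a < b) :
    ∫ x in a..b, ∫ t, ε / ((t - x)^2 + ε^2) ∂μ
      = ∫ t, ∫ x in a..b, ε / ((t - x)^2 + ε^2) ∂volume ∂μ := by
  have hfin : IsFiniteMeasure (volume.restrict (Set.Ioc a b)) :=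
    ⟨by rw [Measure.restrict_apply_univ]; exact measure_Ioc_lt_top⟩
  rw [intervalIntegral.integral_of_le hab.le]
  have hswap := MeasureTheory.integral_integral_swap
    (f := fun (x t : ℝ) => ε / ((t - x)^2 + ε^2))
    (μ := volume.restrict (Set.Ioc a b)) (ν := μ) ?_
  · rw [hswap]
    congr 1; ext t
    rw [intervalIntegral.integral_of_le hab.le]
  · have hc : Continuous (Function.uncurry fun (x t : ℝ) => ε / ((t - x)^2 + ε^2)) := by
      apply Continuous.div continuous_const (by fun_prop)
      intro p; positivity
    apply (integrable_const ε⁻¹).mono' hc.aestronglyMeasurable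
    filter_upwards with p
    simp only [Function.uncurry]
    rw [Real.norm_eq_abs, abs_of_nonneg (by positivity)]
    rw [div_le_iff₀ (by positivity)]
    have h1 : ε⁻¹ * ε^2 = ε := by field_simp [sq]
    nlinarith [sq_nonneg (p.2 - p.1), mul_nonneg (inv_pos.mpr hε).le (sq_nonneg (p.2 - p.1))]

end StieltjesPerronAux

open StieltjesPerronAux Real in
/-- **Stieltjes–Perron inversion formula.** -/
theorem stieltjes_perron_inversion (μ : Measure ℝ) [IsProbabilityMeasure μ]
    (w : ℂ → ℂ) (hw : ∀ z : ℂ, z.im ≠ 0 → w z = ∫ x : ℝ, ((x : ℂ) - z)⁻¹ ∂μ)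
    (a b : ℝ) (hab : a < b) :
    Tendsto (fun ε : ℝ => (1 / Real.pi) * ∫ x in a..b, (w (x + ε * Complex.I)).im)
      (nhdsWithin 0 (Set.Ioi 0))
      (nhds ((μ (Set.Ioo a b)).toReal + (1 / 2) * (μ {a}).toReal
        + (1 / 2) * (μ {b}).toReal)) := by
  have hπ : (0:ℝ) < π := Real.pi_pos
  set F : ℝ → ℝ → ℝ := fun ε t => (1/π) * (arctan ((b - t)/ε) - arctan ((a - t)/ε)) with hF
  set f : ℝ → ℝ := fun t => Set.indicator (Set.Ioo a b) (fun _ => (1:ℝ)) t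
      + Set.indicator {a} (fun _ => (1/2 : ℝ)) t + Set.indicator {b} (fun _ => (1/2 : ℝ)) t
      with hf
  -- Step 1: identification of the integral for ε > 0
  have key : ∀ ε : ℝ, 0 < ε →
      (1 / π) * ∫ x in a..b, (w (x + ε * Complex.I)).im = ∫ t, F ε t ∂μ := by
    intro ε hε
    have him : ∀ x : ℝ, (w (x + ε * Complex.I)).im = ∫ t, ε / ((t - x)^2 + ε^2) ∂μ := by
      intro x
      have hz : ((x : ℂ) + ε * Complex.I).im ≠ 0 := by simp [hε.ne']
      rw [hw _ hz]
      have h1 : (∫ t : ℝ, ((t:ℂ) - ((x:ℂ) + ε * Complex.I))⁻¹ ∂μ).im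
          = ∫ t : ℝ, (((t:ℂ) - ((x:ℂ) + ε * Complex.I))⁻¹).im ∂μ :=
        (integral_im (integrable_kernel μ _ hz)).symm
      rw [h1]
      congr 1; ext t
      exact im_inv_kernel t x ε
    calc (1 / π) * ∫ x in a..b, (w (x + ε * Complex.I)).im
        = (1 / π) * ∫ x in a..b, ∫ t, ε / ((t - x)^2 + ε^2) ∂μ := by
          congr 1
          exact intervalIntegral.integral_congr fun x _ => him x
      _ = (1 / π) * ∫ t, ∫ x in a..b, ε / ((t - x)^2 + ε^2) ∂volume ∂μ := by
          rw [fubini_step μ ε a b hε hab]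
      _ = (1 / π) * ∫ t, (arctan ((b - t)/ε) - arctan ((a - t)/ε)) ∂μ := by
          congr 1
          congr 1; ext t
          exact ftc_arctan t ε a b hε
      _ = ∫ t, F ε t ∂μ := (MeasureTheory.integral_const_mul _ _).symm
  -- Step 2: dominated convergence
  have hbound : Integrable (fun _ : ℝ => (1:ℝ)) μ := integrable_const 1
  have hmeas : ∀ᶠ ε in nhdsWithin (0:ℝ) (Set.Ioi 0), AEStronglyMeasurable (F ε) μ := by
    filter_upwards with ε
    exact (continuous_const.mul
      ((Real.continuous_arctan.comp ((continuous_const.sub continuous_id).div_const ε)).sub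
        (Real.continuous_arctan.comp
          ((continuous_const.sub continuous_id).div_const ε)))).aestronglyMeasurable
  have hle : ∀ᶠ ε in nhdsWithin (0:ℝ) (Set.Ioi 0), ∀ᵐ t ∂μ, ‖F ε t‖ ≤ 1 := by
    filter_upwards with ε
    filter_upwards with t
    have h1 : |arctan ((b - t)/ε)| ≤ π/2 := abs_le.mpr
      ⟨(Real.neg_pi_div_two_lt_arctan _).le, (Real.arctan_lt_pi_div_two _).le⟩
    have h2 : |arctan ((a - t)/ε)| ≤ π/2 := abs_le.mpr
      ⟨(Real.neg_pi_div_two_lt_arctan _).le, (Real.arctan_lt_pi_div_two _).le⟩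
    rw [hF]
    simp only [Real.norm_eq_abs, abs_mul, abs_div, abs_one, abs_of_pos hπ]
    have h3 : |arctan ((b - t)/ε) - arctan ((a - t)/ε)| ≤ π := by
      calc |arctan ((b - t)/ε) - arctan ((a - t)/ε)|
          ≤ |arctan ((b - t)/ε)| + |arctan ((a - t)/ε)| := abs_sub _ _
        _ ≤ π/2 + π/2 := add_le_add h1 h2
        _ = π := by ring
    calc 1/π * |arctan ((b - t)/ε) - arctan ((a - t)/ε)| ≤ 1/π * π :=
          mul_le_mul_of_nonneg_left h3 (by positivity)
      _ = 1 := by field_simp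
  have hptwise : ∀ᵐ t ∂μ, Tendsto (fun ε => F ε t) (nhdsWithin 0 (Set.Ioi 0)) (nhds (f t)) := by
    filter_upwards with t
    have harct : ∀ c : ℝ, Tendsto (fun ε : ℝ => arctan (c/ε)) (nhdsWithin 0 (Set.Ioi 0))
        (nhds (if 0 < c then π/2 else if c < 0 then -(π/2) else 0)) := by
      intro c
      rcases lt_trichotomy c 0 with h | h | h
      · simpa [if_neg (not_lt.mpr h.le), if_pos h] using arctan_lim_neg c h
      · subst h
        simpa using tendsto_const_nhds (α := ℝ) (x := arctan 0)
      · simpa [if_pos h] using arctan_lim_pos c h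
    have hlim := ((harct (b - t)).sub (harct (a - t))).const_mul (1/π)
    have hft : f t = (1/π) * ((if 0 < b - t then π/2 else if b - t < 0 then -(π/2) else 0)
        - (if 0 < a - t then π/2 else if a - t < 0 then -(π/2) else 0)) := by
      rcases lt_trichotomy t a with h | h | h
      · rw [if_pos (by linarith : 0 < b - t), if_pos (by linarith : 0 < a - t)]
        have hv : f t = 0 := by
          simp [hf, Set.indicator_apply, Set.mem_Ioo, h.ne, (h.trans hab).ne, not_lt.mpr h.le]
        rw [hv]; ring
      · subst h
        rw [if_pos (by linarith : 0 < b - t), if_neg (by simp), if_neg (by simp)]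
        have hv : f t = 1/2 := by
          simp [hf, Set.indicator_apply, Set.mem_Ioo, hab.ne]
        rw [hv]; field_simp; ring
      · rcases lt_trichotomy t b with h2 | h2 | h2
        · rw [if_pos (by linarith : 0 < b - t), if_neg (by intro hc; linarith),
            if_pos (by linarith : a - t < 0)]
          have hv : f t = 1 := by
            simp [hf, Set.indicator_apply, Set.mem_Ioo, h, h2, h.ne', h2.ne]
          rw [hv]
          field_simp
          try ring
        · subst h2
          rw [if_neg (by simp), if_neg (by simp), if_neg (by intro hc; linarith),
            if_pos (by linarith : a - t < 0)]
          have hv : f t = 1/2 := by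
            simp [hf, Set.indicator_apply, Set.mem_Ioo, hab.ne']
          rw [hv]; field_simp; ring
        · rw [if_neg (by intro hc; linarith), if_pos (by linarith : b - t < 0),
            if_neg (by intro hc; linarith), if_pos (by linarith : a - t < 0)]
          have hv : f t = 0 := by
            simp [hf, Set.indicator_apply, Set.mem_Ioo, (hab.trans h2).ne', h2.ne',
              not_lt.mpr h2.le]
          rw [hv]; ring
    rw [hft]
    exact hlim
  have hDCT := tendsto_integral_filter_of_dominated_convergence
    (μ := μ) (F := F) (f := f) (fun _ => (1:ℝ)) hmeas hle hbound hptwise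
  have hint : ∫ t, f t ∂μ = (μ (Set.Ioo a b)).toReal + (1 / 2) * (μ {a}).toReal
      + (1 / 2) * (μ {b}).toReal := by
    have i1 : Integrable (Set.indicator (Set.Ioo a b) (fun _ => (1:ℝ))) μ :=
      (integrable_const 1).indicator measurableSet_Ioo
    have i2 : Integrable (Set.indicator {a} (fun _ => (1/2:ℝ))) μ :=
      (integrable_const (1/2)).indicator (measurableSet_singleton a)
    have i3 : Integrable (Set.indicator {b} (fun _ => (1/2:ℝ))) μ :=
      (integrable_const (1/2)).indicator (measurableSet_singleton b)
    have e1 : ∫ t, (Set.indicator (Set.Ioo a b) (fun _ => (1:ℝ)) t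
          + Set.indicator {a} (fun _ => (1/2:ℝ)) t) + Set.indicator {b} (fun _ => (1/2:ℝ)) t ∂μ
        = (∫ t, Set.indicator (Set.Ioo a b) (fun _ => (1:ℝ)) t
          + Set.indicator {a} (fun _ => (1/2:ℝ)) t ∂μ)
          + ∫ t, Set.indicator {b} (fun _ => (1/2:ℝ)) t ∂μ := integral_add (i1.add i2) i3
    have e2 : ∫ t, Set.indicator (Set.Ioo a b) (fun _ => (1:ℝ)) t
          + Set.indicator {a} (fun _ => (1/2:ℝ)) t ∂μ
        = (∫ t, Set.indicator (Set.Ioo a b) (fun _ => (1:ℝ)) t ∂μ)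
          + ∫ t, Set.indicator {a} (fun _ => (1/2:ℝ)) t ∂μ := integral_add i1 i2
    simp only [hf]
    rw [e1, e2, integral_indicator_const _ measurableSet_Ioo,
      integral_indicator_const _ (measurableSet_singleton a),
      integral_indicator_const _ (measurableSet_singleton b)]
    simp only [smul_eq_mul]
    simp only [measureReal_def]
    ring
  rw [← hint]
  apply hDCT.congr'
  filter_upwards [self_mem_nhdsWithin] with ε (hε : (0:ℝ) < ε)
  exact (key ε hε).symm
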